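/- Let F: {−1,1}ⁿ → ℝ^{I×J} be a matrix-valued multilinear polynomial function, and for a,b ≥ 0 define F_{a,b} as the matrix indexed by (I×{0,1}ⁿ) × (J×{0,1}ⁿ) with entries F_{a,b}[(i,α),(j,β)] = ∇_{α+β}F[i,j] when |α| = a, |β| = b, α·β = 0, and 0 otherwise, where Z is uniform on {−1,1}ⁿ and Z^{(i)} resamples coordinate i. Then Σ_{i=1}^n E[(F_{a,b}(Z) − F_{a,b}(Z^{(i)}))(F_{a,b}(Z) − F_{a,b}(Z^{(i)}))ᵀ | Z] = 2(b+1)·F_{a,b+1}F_{a,b+1}ᵀ. -/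

import Mathlib

open Matrix Finset

lemma dv_diff_aux {n : ℕ} {I J : Type}
    (c : I → J → Finset (Fin n) → ℝ)
    (Dv : I → J → Finset (Fin n) → (Fin n → ℝ) → ℝ)
    (hDv : ∀ i j T z, Dv i j T z =
      ∑ S ∈ Finset.univ.filter (fun S : Finset (Fin n) => T ⊆ S),
        c i j S * ∏ k ∈ S \ T, z k)
    (i : I) (j : J) (T : Finset (Fin n)) (z : Fin n → ℝ) (i₀ : Fin n) (s : ℝ) :
    Dv i j T z - Dv i j T (Function.update z i₀ s) =
      if i₀ ∈ T then 0 else (z i₀ - s) * Dv i j (insert i₀ T) z := by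
  rw [hDv, hDv, hDv, ← Finset.sum_sub_distrib]
  split_ifs with h
  · refine Finset.sum_eq_zero fun S hS => ?_
    have hp : ∏ k ∈ S \ T, Function.update z i₀ s k = ∏ k ∈ S \ T, z k := by
      refine Finset.prod_congr rfl fun k hk => ?_
      refine Function.update_of_ne ?_ _ _
      rintro rfl; exact (Finset.mem_sdiff.mp hk).2 h
    rw [hp, sub_self]
  · rw [Finset.mul_sum]
    rw [← Finset.sum_subset (s₁ := Finset.univ.filter
        (fun S : Finset (Fin n) => insert i₀ T ⊆ S))
        (by intro S hS; simp only [Finset.mem_filter, Finset.mem_univ, true_and] at hS ⊢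
            exact (Finset.insert_subset_iff.mp hS).2)
        (by intro S hS hS'
            simp only [Finset.mem_filter, Finset.mem_univ, true_and] at hS hS'
            have hi₀S : i₀ ∉ S := fun hi => hS' (Finset.insert_subset hi hS)
            have hp : ∏ k ∈ S \ T, Function.update z i₀ s k = ∏ k ∈ S \ T, z k := by
              refine Finset.prod_congr rfl fun k hk => ?_
              refine Function.update_of_ne ?_ _ _
              rintro rfl; exact hi₀S (Finset.mem_sdiff.mp hk).1
            rw [hp, sub_self])]
    refine Finset.sum_congr rfl fun S hS => ?_
    simp only [Finset.mem_filter, Finset.mem_univ, true_and] at hS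
    have hi₀S : i₀ ∈ S := hS (Finset.mem_insert_self _ _)
    have hTS : T ⊆ S := fun x hx => hS (Finset.mem_insert_of_mem hx)
    have hd : S \ T = insert i₀ (S \ insert i₀ T) := by
      ext k
      simp only [Finset.mem_sdiff, Finset.mem_insert, not_or]
      constructor
      · rintro ⟨hkS, hkT⟩
        by_cases hki : k = i₀
        · exact Or.inl hki
        · exact Or.inr ⟨hkS, hki, hkT⟩
      · rintro (rfl | ⟨hkS, _, hkT⟩)
        · exact ⟨hi₀S, h⟩
        · exact ⟨hkS, hkT⟩
    have hnot : i₀ ∉ S \ insert i₀ T := by simp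
    rw [hd, Finset.prod_insert hnot, Finset.prod_insert hnot,
      Function.update_self]
    have hp : ∏ k ∈ S \ insert i₀ T, Function.update z i₀ s k
        = ∏ k ∈ S \ insert i₀ T, z k := by
      refine Finset.prod_congr rfl fun k hk => ?_
      refine Function.update_of_ne ?_ _ _
      rintro rfl; exact (Finset.mem_sdiff.mp hk).2 (Finset.mem_insert_self _ _)
    rw [hp]
    ring

lemma sum_insert_rearrange {n b : ℕ} (G : Finset (Fin n) → ℝ)
    (hG : ∀ β, β.card ≠ b + 1 → G β = 0) :
    ∑ i : Fin n, ∑ β : Finset (Fin n), (if i ∉ β then G (insert i β) else 0)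
      = ((b : ℝ) + 1) * ∑ β : Finset (Fin n), G β := by
  have h1 : ∀ i : Fin n, ∑ β : Finset (Fin n), (if i ∉ β then G (insert i β) else 0)
      = ∑ β ∈ Finset.univ.filter (fun β => i ∈ β), G β := by
    intro i
    rw [← Finset.sum_filter]
    refine Finset.sum_nbij' (insert i) (Finset.erase · i) ?_ ?_ ?_ ?_ ?_
    · intro β hβ; simp
    · intro β hβ; simp
    · intro β hβ
      simp only [Finset.mem_filter, Finset.mem_univ, true_and] at hβ
      exact Finset.erase_insert hβ
    · intro β hβ
      simp only [Finset.mem_filter, Finset.mem_univ, true_and] at hβ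
      exact Finset.insert_erase hβ
    · intro β hβ; rfl
  simp_rw [h1, Finset.sum_filter]
  rw [Finset.sum_comm]
  have h2 : ∀ β : Finset (Fin n), ∑ i : Fin n, (if i ∈ β then G β else 0)
      = ((b : ℝ) + 1) * G β := by
    intro β
    rw [← Finset.sum_filter, Finset.filter_univ_mem, Finset.sum_const, nsmul_eq_mul]
    by_cases hc : β.card = b + 1
    · rw [hc]; push_cast; ring
    · rw [hG β hc, mul_zero, mul_zero]
  simp_rw [h2]
  rw [← Finset.mul_sum]

theorem rademacher_variance_proxy_claim
    {n a b : ℕ} {I J : Type} [Fintype I] [Fintype J]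
    (c : I → J → Finset (Fin n) → ℝ)
    (Dv : I → J → Finset (Fin n) → (Fin n → ℝ) → ℝ)
    (hDv : ∀ i j T z, Dv i j T z =
      ∑ S ∈ Finset.univ.filter (fun S : Finset (Fin n) => T ⊆ S),
        c i j S * ∏ k ∈ S \ T, z k)
    (Fab : ℕ → ℕ → (Fin n → ℝ) → Matrix (I × Finset (Fin n)) (J × Finset (Fin n)) ℝ)
    (hFab : ∀ a' b' z p q, Fab a' b' z p q =
      if p.2.card = a' ∧ q.2.card = b' ∧ Disjoint p.2 q.2
      then Dv p.1 q.1 (p.2 ∪ q.2) z else 0)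
    (z : Fin n → ℝ) (hz : ∀ k, z k = 1 ∨ z k = -1) :
    ∑ i : Fin n, ((1 : ℝ)/2) •
      ((Fab a b z - Fab a b (Function.update z i 1)) *
          (Fab a b z - Fab a b (Function.update z i 1))ᵀ
        + (Fab a b z - Fab a b (Function.update z i (-1))) *
          (Fab a b z - Fab a b (Function.update z i (-1)))ᵀ)
      = (2 * ((b : ℝ) + 1)) • (Fab a (b + 1) z * (Fab a (b + 1) z)ᵀ) := by
  classical
  have hdiff : ∀ (i₀ : Fin n) (s : ℝ) (p : I × Finset (Fin n)) (q : J × Finset (Fin n)),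
      (Fab a b z - Fab a b (Function.update z i₀ s)) p q =
        if (p.2.card = a ∧ q.2.card = b ∧ Disjoint p.2 q.2) ∧ i₀ ∉ p.2 ∪ q.2
        then (z i₀ - s) * Dv p.1 q.1 (insert i₀ (p.2 ∪ q.2)) z else 0 := by
    intro i₀ s p q
    simp only [Matrix.sub_apply, hFab]
    by_cases h : p.2.card = a ∧ q.2.card = b ∧ Disjoint p.2 q.2
    · rw [if_pos h, if_pos h, dv_diff_aux c Dv hDv]
      by_cases h2 : i₀ ∈ p.2 ∪ q.2
      · rw [if_pos h2, if_neg (by tauto)]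
      · rw [if_neg h2, if_pos ⟨h, h2⟩]
    · rw [if_neg h, if_neg h, sub_self, if_neg (by tauto)]
  ext p q
  rw [Matrix.sum_apply]
  have E1 : ∀ i : Fin n,
      (((1 : ℝ)/2) • ((Fab a b z - Fab a b (Function.update z i 1)) *
          (Fab a b z - Fab a b (Function.update z i 1))ᵀ
        + (Fab a b z - Fab a b (Function.update z i (-1))) *
          (Fab a b z - Fab a b (Function.update z i (-1)))ᵀ)) p q
      = ∑ r : J × Finset (Fin n),
          (if ((p.2.card = a ∧ r.2.card = b ∧ Disjoint p.2 r.2) ∧ i ∉ p.2 ∪ r.2) ∧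
              ((q.2.card = a ∧ r.2.card = b ∧ Disjoint q.2 r.2) ∧ i ∉ q.2 ∪ r.2)
           then 2 * (Dv p.1 r.1 (insert i (p.2 ∪ r.2)) z *
                     Dv q.1 r.1 (insert i (q.2 ∪ r.2)) z) else 0) := by
    intro i
    simp only [Matrix.smul_apply, Matrix.add_apply, Matrix.mul_apply,
      Matrix.transpose_apply, smul_eq_mul, hdiff, ite_zero_mul_ite_zero]
    rw [← Finset.sum_add_distrib, Finset.mul_sum]
    refine Finset.sum_congr rfl fun r _ => ?_
    split_ifs with hC
    · rcases hz i with h1 | h1 <;> rw [h1] <;> ring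
    · ring
  rw [Finset.sum_congr rfl fun i _ => E1 i]
  have E3 : ((2 * ((b : ℝ) + 1)) • (Fab a (b + 1) z * (Fab a (b + 1) z)ᵀ)) p q
      = (2 * ((b : ℝ) + 1)) * ∑ r : J × Finset (Fin n),
          (if (p.2.card = a ∧ r.2.card = b + 1 ∧ Disjoint p.2 r.2) ∧
              (q.2.card = a ∧ r.2.card = b + 1 ∧ Disjoint q.2 r.2)
           then Dv p.1 r.1 (p.2 ∪ r.2) z * Dv q.1 r.1 (q.2 ∪ r.2) z else 0) := by
    simp only [Matrix.smul_apply, Matrix.mul_apply, Matrix.transpose_apply,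
      smul_eq_mul, hFab, ite_zero_mul_ite_zero]
  rw [E3]
  set G : J → Finset (Fin n) → ℝ := fun j β =>
    if (p.2.card = a ∧ β.card = b + 1 ∧ Disjoint p.2 β) ∧
        (q.2.card = a ∧ β.card = b + 1 ∧ Disjoint q.2 β)
    then 2 * (Dv p.1 j (p.2 ∪ β) z * Dv q.1 j (q.2 ∪ β) z) else 0 with hG
  have step1 : ∑ i : Fin n, ∑ r : J × Finset (Fin n),
      (if ((p.2.card = a ∧ r.2.card = b ∧ Disjoint p.2 r.2) ∧ i ∉ p.2 ∪ r.2) ∧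
          ((q.2.card = a ∧ r.2.card = b ∧ Disjoint q.2 r.2) ∧ i ∉ q.2 ∪ r.2)
       then 2 * (Dv p.1 r.1 (insert i (p.2 ∪ r.2)) z *
                 Dv q.1 r.1 (insert i (q.2 ∪ r.2)) z) else 0)
      = ∑ j : J, ∑ i : Fin n, ∑ β : Finset (Fin n),
          (if i ∉ β then G j (insert i β) else 0) := by
    simp only [Fintype.sum_prod_type]
    rw [Finset.sum_comm]
    refine Finset.sum_congr rfl fun j _ => Finset.sum_congr rfl fun i _ =>
      Finset.sum_congr rfl fun β _ => ?_
    by_cases hiβ : i ∈ β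
    · rw [if_neg (by simp [hiβ]), if_neg (by simp [hiβ])]
    · rw [if_pos hiβ, hG]
      simp only
      rw [← Finset.union_insert, ← Finset.union_insert]
      refine if_congr ?_ rfl rfl
      simp only [Finset.card_insert_of_notMem hiβ, Finset.disjoint_insert_right,
        Finset.mem_union, not_or, add_left_inj]
      tauto
  rw [step1]
  have step2 : ∀ j : J, ∑ i : Fin n, ∑ β : Finset (Fin n),
      (if i ∉ β then G j (insert i β) else 0) = ((b : ℝ) + 1) * ∑ β, G j β := by
    intro j
    refine sum_insert_rearrange (G j) fun β hβ => ?_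
    rw [hG]
    simp only
    rw [if_neg (by tauto)]
  rw [Finset.sum_congr rfl fun j _ => step2 j]
  rw [← Finset.mul_sum]
  simp only [Fintype.sum_prod_type]
  have : ∀ j : J, ∑ β : Finset (Fin n), G j β = 2 * ∑ β : Finset (Fin n),
      (if (p.2.card = a ∧ β.card = b + 1 ∧ Disjoint p.2 β) ∧
          (q.2.card = a ∧ β.card = b + 1 ∧ Disjoint q.2 β)
       then Dv p.1 j (p.2 ∪ β) z * Dv q.1 j (q.2 ∪ β) z else 0) := by
    intro j
    rw [Finset.mul_sum]
    refine Finset.sum_congr rfl fun β _ => ?_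
    rw [hG]
    simp only [mul_ite, mul_zero]
  rw [Finset.sum_congr rfl fun j _ => this j]
  
  rw [← Finset.mul_sum]
  ring
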